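/- Let Ω be a generalized full vertex superalgebra and e_γ ∈ Ω^γ, e_{−γ} ∈ Ω^{−γ} be elements of A_Ω = ker L_Ω(−1) ∩ ker L̄_Ω(−1) with e_γ · e_{−γ} = 1. Then (γ,γ)_c + |e_γ| is an even integer, the left multiplication by e_γ is injective on Ω, and the maps Ψ_{±γ}: Ω → Ω, a ↦ a(−1,−1)e_{±γ} are mutually inverse Ω-module isomorphisms. -/
import Mathlib


/-!
Statement 11: In a generalized full vertex superalgebra `Ω`, let `e_γ ∈ Ω^γ` and
`e_{−γ} ∈ Ω^{−γ}` be translation-invariant vectors with `e_γ · e_{−γ} = 𝟙`.  Then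
`(γ,γ)_c + |e_γ|` is even, left multiplication by `e_γ` is injective, and the right
multiplications `Ψ_{±γ} : a ↦ a(−1,−1)e_{±γ}` are mutually inverse `Ω`-module
isomorphisms.

The mode operators are encoded by `M : Ω → ℝ → ℝ → Ω →ₗ[ℂ] Ω`,
`M a r s b = a(r,s)b`, and `a · b := a(−1,−1)b`.
-/

noncomputable section

open Classical in
/-- `(−1)^x` for `x ∈ ℤ ⊂ ℝ` (and junk value `1` otherwise). -/
noncomputable def negOnePowR (x : ℝ) : ℂ :=
  if h : ∃ n : ℤ, x = (n : ℝ) then (-1 : ℂ) ^ h.choose else 1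

/-- Here `γγc = (γ,γ)_c` and `pγ = |e_γ|` is the common parity of
`e_γ, e_{−γ}`; the hypotheses are: linearity of the modes in the first argument, `𝟙`
is a two-sided unit for the `(−1,−1)`-product, `e_γ · e_{−γ} = 𝟙`, `(γ,γ)_c ∈ ℤ`
(from the monodromy lemma), the skew-symmetry relations
`e_γ·e_{−γ} = (−1)^{|e_γ||e_{−γ}|+(γ,γ)_c} e_{−γ}·e_γ` and
`e_γ·e_γ = (−1)^{|e_γ|+(γ,γ)_c} e_γ·e_γ`, associativity
`e_{−γ}·(e_γ·a) = (e_{−γ}·e_γ)·a`, and the module-homomorphism property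
`Ŷ(a,z)(b(−1,−1)e_{±γ}) = (Ŷ(a,z)b)(−1,−1)e_{±γ}`. -/
theorem prop_app_invertible
    {Ω : Type*} [AddCommGroup Ω] [Module ℂ Ω]
    (M : Ω → ℝ → ℝ → Ω →ₗ[ℂ] Ω)
    (hlinM : ∀ (C : ℂ) (x y : Ω) (r s : ℝ), M (C • x + y) r s = C • M x r s + M y r s)
    (one eγ emγ : Ω) (γγc : ℝ) (pγ : ℤ)
    (honez : one ≠ 0)
    (hone : ∀ a : Ω, M one (-1) (-1) a = a)
    (honeR : ∀ a : Ω, M a (-1) (-1) one = a)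
    (hmul : M eγ (-1) (-1) emγ = one)
    (hγint : ∃ n : ℤ, γγc = (n : ℝ))
    (hskew : M eγ (-1) (-1) emγ
        = (((-1 : ℂ) ^ (pγ * pγ)) * negOnePowR γγc) • M emγ (-1) (-1) eγ)
    (hskew2 : M eγ (-1) (-1) eγ
        = (((-1 : ℂ) ^ (pγ * pγ)) * negOnePowR γγc) • M eγ (-1) (-1) eγ)
    (hassoc : ∀ a : Ω, M emγ (-1) (-1) (M eγ (-1) (-1) a)
        = M (M emγ (-1) (-1) eγ) (-1) (-1) a)
    (hmodγ : ∀ (a b : Ω) (r s : ℝ),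
        M a r s (M b (-1) (-1) eγ) = M (M a r s b) (-1) (-1) eγ)
    (hmodmγ : ∀ (a b : Ω) (r s : ℝ),
        M a r s (M b (-1) (-1) emγ) = M (M a r s b) (-1) (-1) emγ) :
    (∃ k : ℤ, γγc + (pγ : ℝ) = 2 * (k : ℝ))
    ∧ (∀ a : Ω, M eγ (-1) (-1) a = 0 → a = 0)
    ∧ (∀ a : Ω, M (M a (-1) (-1) emγ) (-1) (-1) eγ = a)
    ∧ (∀ a : Ω, M (M a (-1) (-1) eγ) (-1) (-1) emγ = a) := by
  classical
  -- M 0 r s = 0 and homogeneity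
  have hM0 : ∀ r s : ℝ, M 0 r s = 0 := by
    intro r s
    have h := hlinM 1 0 0 r s
    simp only [one_smul, add_zero] at h
    exact (left_eq_add.mp h)
  have hsmul : ∀ (C : ℂ) (x : Ω) (r s : ℝ), M (C • x) r s = C • M x r s := by
    intro C x r s
    have h := hlinM C x 0 r s
    simpa [hM0] using h
  obtain ⟨n, hn⟩ := hγint
  -- compute negOnePowR γγc
  have hpow : negOnePowR γγc = (-1 : ℂ) ^ n := by
    have h' : ∃ m : ℤ, γγc = (m : ℝ) := ⟨n, hn⟩
    rw [negOnePowR, dif_pos h']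
    congr 1
    have hc : (h'.choose : ℝ) = (n : ℝ) := by rw [← h'.choose_spec, hn]
    exact_mod_cast hc
  set ε : ℂ := ((-1 : ℂ) ^ (pγ * pγ)) * negOnePowR γγc with hε
  have hεne : ε ≠ 0 := by
    rw [hε, hpow]
    exact mul_ne_zero (zpow_ne_zero _ (by norm_num)) (zpow_ne_zero _ (by norm_num))
  have heγne : eγ ≠ 0 := by
    intro h
    apply honez
    rw [← hmul, h, hM0]
    rfl
  -- ε = 1
  have hε1 : ε = 1 := by
    by_contra hne
    -- from hskew2, eγ·eγ = 0
    have hx : M eγ (-1) (-1) eγ = 0 := by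
      have h : (1 - ε) • M eγ (-1) (-1) eγ = 0 := by
        rw [sub_smul, one_smul, ← hskew2, sub_self]
      rcases smul_eq_zero.mp h with h' | h'
      · exact absurd (by linear_combination -h' : ε = 1) hne
      · exact h'
    -- but then emγ·(eγ·eγ) = 0 forces eγ = 0
    have hba : M emγ (-1) (-1) eγ = ε⁻¹ • one := by
      have := hskew
      rw [hmul] at this
      rw [this, smul_smul, inv_mul_cancel₀ hεne, one_smul]
    have h3 : ε⁻¹ • eγ = 0 := by
      have h2 := hassoc eγ
      rw [hx, hba, hsmul] at h2
      simpa [hone] using h2.symm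
    have : eγ = 0 := by
      rcases smul_eq_zero.mp h3 with h' | h'
      · exact absurd h' (inv_ne_zero hεne)
      · exact h'
    exact heγne this
  -- hence emγ·eγ = one
  have hba1 : M emγ (-1) (-1) eγ = one := by
    have := hskew
    rw [hmul, hε1, one_smul] at this
    exact this.symm
  refine ⟨?_, ?_, ?_, ?_⟩
  · -- parity
    have hzp : (-1 : ℂ) ^ (pγ * pγ + n) = 1 := by
      rw [zpow_add₀ (by norm_num : (-1 : ℂ) ≠ 0)]
      rw [hε, hpow] at hε1
      exact hε1
    have heven : Even (pγ * pγ + n) := by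
      by_contra hodd
      rw [Int.not_even_iff_odd] at hodd
      rw [hodd.neg_one_zpow] at hzp
      norm_num at hzp
    have heven2 : Even (pγ + n) := by
      rcases Int.even_or_odd pγ with hp | hp
      · have : Even (pγ * pγ) := hp.mul_right _
        have hne : Even n := by
          rcases Int.even_add.mp heven with h
          exact h.mp this
        exact hp.add hne
      · have hpp : Odd (pγ * pγ) := hp.mul hp
        have hno : Odd n := by
          rcases Int.even_or_odd n with h | h
          · exfalso
            exact (Int.not_even_iff_odd.mpr (hpp.add_even h)) heven
          · exact h
        exact hp.add_odd hno
    obtain ⟨k, hk⟩ := heven2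
    refine ⟨k, ?_⟩
    rw [hn]
    have : (pγ : ℝ) + n = k + k := by exact_mod_cast congrArg (Int.cast : ℤ → ℝ) hk
    linarith
  · -- injectivity
    intro a ha
    have h := hassoc a
    rw [ha, hba1, hone] at h
    simpa using h.symm
  · -- Ψ_{-γ} then Ψ_γ
    intro a
    have h := hmodγ a emγ (-1) (-1)
    rw [hba1, honeR] at h
    exact h.symm
  · -- Ψ_γ then Ψ_{-γ}
    intro a
    have h := hmodmγ a eγ (-1) (-1)
    rw [hmul, honeR] at h
    exact h.symm

end
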